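/- arXiv:2205.09516 — 3 statements merged into one kernel-verified Lean document; each statement's English description precedes it below -/
import Mathlib

section
/- Let H ∈ (1/2, 1) and β ∈ ℝ. Then for all s,t ≥ 0 the fOU covariance kernel K(s,t) = ∫₀ᵗ e^{β(t−v)} · (d/dv)( ∫₀ˢ H·|v−u|^{2H−1}·sign(v−u)·e^{β(s−u)} du ) dv admits the representation K(s,t) = H(2H−1) · ∫₀ᵗ ∫₀ˢ e^{β(t−v)} e^{β(s−u)} |u−v|^{2H−2} du dv; equivalently, with α := 2−2H ∈ (0,1) and c_α := (1−α/2)(1−α), K(s,t) = c_α ∫₀ᵗ ∫₀ˢ e^{β(t−v)} e^{β(s−u)} |u−v|^{−α} du dv. -/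
open Real Set

/-- The fractional Ornstein–Uhlenbeck covariance kernel. -/
noncomputable def fOUkernel (H β : ℝ) (s t : ℝ) : ℝ :=
  ∫ v in (0:ℝ)..t, Real.exp (β * (t - v)) *
    deriv (fun w : ℝ =>
      ∫ u in (0:ℝ)..s, H * |w - u| ^ (2 * H - 1) * Real.sign (w - u) * Real.exp (β * (s - u))) v

open MeasureTheory intervalIntegral

section aux
variable {H β s : ℝ}

/-- the odd power kernel -/
noncomputable def gg (H : ℝ) (x : ℝ) : ℝ := H * |x| ^ (2 * H - 1) * Real.sign x

lemma gg_cont (hH : H ∈ Set.Ioo (1/2 : ℝ) 1) : Continuous (gg H) := by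
  obtain ⟨h1, h2⟩ := hH
  have hν : 0 < 2 * H - 1 := by linarith
  rw [continuous_iff_continuousAt]
  intro x
  rcases lt_trichotomy x 0 with hx | hx | hx
  · have he : (fun y => H * (-y) ^ (2*H-1) * (-1)) =ᶠ[nhds x] gg H := by
      filter_upwards [Iio_mem_nhds hx] with y hy
      rw [Set.mem_Iio] at hy
      simp only [gg, Real.sign_of_neg hy, abs_of_neg hy]
    refine ContinuousAt.congr ?_ he
    exact (((Real.continuousAt_rpow_const (-x) _ (Or.inl (by linarith))).comp
      continuous_neg.continuousAt).const_mul H).mul continuousAt_const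
  · subst hx
    have h0 : gg H 0 = 0 := by simp [gg]
    rw [ContinuousAt, h0]
    have habs : Filter.Tendsto (fun y : ℝ => |H| * |y| ^ (2*H-1)) (nhds 0) (nhds 0) := by
      have h1 : ContinuousAt (fun y : ℝ => |y| ^ (2*H-1)) 0 :=
        ContinuousAt.rpow_const continuous_abs.continuousAt (Or.inr hν.le)
      have : Filter.Tendsto (fun y : ℝ => |y| ^ (2*H-1)) (nhds 0) (nhds 0) := by
        simpa [Real.zero_rpow hν.ne'] using h1.tendsto
      simpa using (this.const_mul |H|)
    refine squeeze_zero_norm (fun y => ?_) habs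
    have : |Real.sign y| ≤ 1 := by
      rcases lt_trichotomy y 0 with h | h | h <;>
        simp [Real.sign_of_neg, Real.sign_of_pos, h]
    calc ‖gg H y‖ = |H| * |y| ^ (2*H-1) * |Real.sign y| := by
          simp [gg, abs_mul, abs_rpow_of_nonneg (abs_nonneg y), abs_abs]
      _ ≤ |H| * |y| ^ (2*H-1) * 1 :=
          mul_le_mul_of_nonneg_left this (by positivity)
      _ = |H| * |y| ^ (2*H-1) := by ring
  · have he : (fun y => H * y ^ (2*H-1) * 1) =ᶠ[nhds x] gg H := by
      filter_upwards [Ioi_mem_nhds hx] with y hy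
      rw [Set.mem_Ioi] at hy
      simp only [gg, Real.sign_of_pos hy, abs_of_pos hy]
    refine ContinuousAt.congr ?_ he
    exact (((Real.continuousAt_rpow_const x _ (Or.inl hx.ne')).const_mul H).mul continuousAt_const)

lemma gg_hasDerivAt (hH : H ∈ Set.Ioo (1/2 : ℝ) 1) {x : ℝ} (hx : x ≠ 0) :
    HasDerivAt (gg H) (H * (2*H-1) * |x| ^ (2*H-2)) x := by
  rcases hx.lt_or_gt with hx | hx
  · have he : (fun y => -(H * (-y) ^ (2*H-1))) =ᶠ[nhds x] gg H := by
      filter_upwards [Iio_mem_nhds hx] with y hy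
      rw [Set.mem_Iio] at hy
      simp only [gg, Real.sign_of_neg hy, abs_of_neg hy]; ring
    have hd : HasDerivAt (fun y : ℝ => -(H * (-y) ^ (2*H-1)))
        (H * (2*H-1) * |x| ^ (2*H-2)) x := by
      have h1 : HasDerivAt (fun y : ℝ => (-y) ^ (2*H-1))
          ((2*H-1) * (-x) ^ (2*H-1-1) * (-1)) x :=
        (Real.hasDerivAt_rpow_const (Or.inl (by linarith : -x ≠ 0))).comp x (hasDerivAt_neg x)
      have := (h1.const_mul H).neg
      refine this.congr_deriv ?_
      rw [abs_of_neg hx]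
      ring_nf
    exact hd.congr_of_eventuallyEq he.symm
  · have he : (fun y => H * y ^ (2*H-1)) =ᶠ[nhds x] gg H := by
      filter_upwards [Ioi_mem_nhds hx] with y hy
      rw [Set.mem_Ioi] at hy
      simp only [gg, Real.sign_of_pos hy, abs_of_pos hy]; ring
    have hd : HasDerivAt (fun y : ℝ => H * y ^ (2*H-1))
        (H * (2*H-1) * |x| ^ (2*H-2)) x := by
      have h1 : HasDerivAt (fun y : ℝ => y ^ (2*H-1)) ((2*H-1) * x ^ (2*H-1-1)) x :=
        Real.hasDerivAt_rpow_const (Or.inl hx.ne')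
      have := h1.const_mul H
      refine this.congr_deriv ?_
      rw [abs_of_pos hx]
      ring_nf
    exact hd.congr_of_eventuallyEq he.symm

lemma abs_rpow_intervalIntegrable {r : ℝ} (hr : -1 < r) (a b : ℝ) :
    IntervalIntegrable (fun x : ℝ => |x| ^ r) volume a b := by
  suffices h : ∀ c : ℝ, 0 ≤ c → IntervalIntegrable (fun x : ℝ => |x| ^ r) volume 0 c by
    have h' : ∀ c : ℝ, IntervalIntegrable (fun x : ℝ => |x| ^ r) volume 0 c := by
      intro c
      rcases le_total 0 c with hc | hc
      · exact h c hc
      · have := (IntervalIntegrable.iff_comp_neg (f := fun x : ℝ => |x| ^ r) (a := 0) (b := -c)).mp (h (-c) (by linarith))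
        simp only [abs_neg, neg_neg, neg_zero] at this
        exact this
    exact (h' a).symm.trans (h' b)
  intro c hc
  have := intervalIntegrable_rpow' (a := 0) (b := c) hr
  rw [intervalIntegrable_iff] at this ⊢
  refine this.congr_fun ?_ measurableSet_uIoc
  intro x hx
  rw [uIoc_of_le hc] at hx
  simp only []
  rw [abs_of_pos hx.1]

end aux

/-- For `H > 1/2` the fOU covariance kernel is a double integral against the weight
`H(2H−1)|u−v|^{2H−2} = c_α |u−v|^{−α}` with `α = 2−2H`, `c_α = (1−α/2)(1−α)`. -/
theorem fOUkernel_double_integral_rep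
    (H β : ℝ) (hH : H ∈ Set.Ioo (1/2 : ℝ) 1) (s t : ℝ) (hs : 0 ≤ s) (ht : 0 ≤ t) :
    fOUkernel H β s t =
      H * (2 * H - 1) *
        ∫ v in (0:ℝ)..t, ∫ u in (0:ℝ)..s,
          Real.exp (β * (t - v)) * Real.exp (β * (s - u)) * |u - v| ^ (2 * H - 2) ∧
    fOUkernel H β s t =
      (1 - (2 - 2 * H) / 2) * (1 - (2 - 2 * H)) *
        ∫ v in (0:ℝ)..t, ∫ u in (0:ℝ)..s,
          Real.exp (β * (t - v)) * Real.exp (β * (s - u)) * |u - v| ^ (-(2 - 2 * H)) := by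
  obtain ⟨h1, h2⟩ := hH
  have hr : (-1 : ℝ) < 2 * H - 2 := by linarith
  set hfun : ℝ → ℝ := fun x => gg H x * Real.exp (β * x) with hfun_def
  have hh : Continuous hfun := (gg_cont ⟨h1, h2⟩).mul (Real.continuous_exp.comp
    (continuous_const.mul continuous_id))
  set Ψ : ℝ → ℝ := fun y => ∫ x in (0:ℝ)..y, hfun x with hΨ_def
  have hΨ : ∀ y : ℝ, HasDerivAt Ψ (hfun y) y := fun y =>
    intervalIntegral.integral_hasDerivAt_right (hh.intervalIntegrable _ _)
      (hh.stronglyMeasurableAtFilter _ _) hh.continuousAt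
  set φ : ℝ → ℝ := fun x => H * (2 * H - 1) * |x| ^ (2 * H - 2) * Real.exp (β * x) with hφ_def
  have hφint : ∀ a b : ℝ, IntervalIntegrable φ volume a b := by
    intro a b
    have h0 : IntervalIntegrable (fun x : ℝ => H * (2 * H - 1) * |x| ^ (2 * H - 2)) volume a b :=
      (abs_rpow_intervalIntegrable hr a b).const_mul (H * (2 * H - 1))
    exact h0.mul_continuousOn ((Real.continuous_exp.comp
      (continuous_const.mul continuous_id)).continuousOn)
  -- Step A : the inner integral rewritten
  have keyA : ∀ w : ℝ,
      (∫ u in (0:ℝ)..s, H * |w - u| ^ (2 * H - 1) * Real.sign (w - u) * Real.exp (β * (s - u)))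
        = Real.exp (β * (s - w)) * (Ψ w - Ψ (w - s)) := by
    intro w
    have e1 : (∫ u in (0:ℝ)..s,
          H * |w - u| ^ (2 * H - 1) * Real.sign (w - u) * Real.exp (β * (s - u)))
        = ∫ u in (0:ℝ)..s,
            (fun x => gg H x * (Real.exp (β * (s - w)) * Real.exp (β * x))) (w - u) := by
      refine intervalIntegral.integral_congr fun u _ => ?_
      simp only [gg]
      rw [← Real.exp_add]
      ring_nf
    rw [e1, intervalIntegral.integral_comp_sub_left
      (fun x => gg H x * (Real.exp (β * (s - w)) * Real.exp (β * x))) w, sub_zero]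
    have e2 : (∫ x in (w - s)..w, gg H x * (Real.exp (β * (s - w)) * Real.exp (β * x)))
        = ∫ x in (w - s)..w, Real.exp (β * (s - w)) * hfun x := by
      refine intervalIntegral.integral_congr fun x _ => ?_
      simp only [hfun_def]; ring
    rw [e2, intervalIntegral.integral_const_mul]
    congr 1
    rw [← intervalIntegral.integral_interval_sub_left (hh.intervalIntegrable 0 w)
      (hh.intervalIntegrable 0 (w - s))]
  -- Step B : the derivative of the inner integral
  have keyB : ∀ v : ℝ,
      deriv (fun w : ℝ => ∫ u in (0:ℝ)..s,
          H * |w - u| ^ (2 * H - 1) * Real.sign (w - u) * Real.exp (β * (s - u))) v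
        = Real.exp (β * (s - v)) * ((hfun v - hfun (v - s)) - β * (Ψ v - Ψ (v - s))) := by
    intro v
    have hfeq : (fun w : ℝ => ∫ u in (0:ℝ)..s,
          H * |w - u| ^ (2 * H - 1) * Real.sign (w - u) * Real.exp (β * (s - u)))
        = fun w => Real.exp (β * (s - w)) * (Ψ w - Ψ (w - s)) := funext keyA
    rw [hfeq]
    have hd1 : HasDerivAt (fun w : ℝ => Real.exp (β * (s - w)))
        (Real.exp (β * (s - v)) * -β) v := by
      have hlin : HasDerivAt (fun w : ℝ => β * (s - w)) (-β) v := by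
        simpa using ((hasDerivAt_id v).const_sub s).const_mul β
      simpa using hlin.exp
    have hd2 : HasDerivAt (fun w : ℝ => Ψ w - Ψ (w - s)) (hfun v - hfun (v - s)) v := by
      refine (hΨ v).sub ?_
      have := (hΨ (v - s)).comp v ((hasDerivAt_id v).sub_const s)
      simpa [Function.comp_def] using this
    have := hd1.mul hd2
    refine this.deriv.trans ?_
    ring
  -- Step C : fundamental theorem of calculus for the singular part
  have keyC : ∀ v : ℝ,
      (∫ x in (v - s)..v, φ x)
        = (hfun v - hfun (v - s)) - β * (Ψ v - Ψ (v - s)) := by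
    intro v
    have hftc : (∫ x in (v - s)..v, (φ x + β * hfun x)) = hfun v - hfun (v - s) := by
      refine MeasureTheory.integral_eq_of_hasDerivAt_off_countable hfun
        (fun x => φ x + β * hfun x) (Set.countable_singleton 0) hh.continuousOn ?_
        ((hφint _ _).add ((continuous_const.mul hh).intervalIntegrable _ _))
      intro x hx
      have hx0 : x ≠ 0 := by
        intro h; exact hx.2 (by simp [h])
      have hgd := gg_hasDerivAt ⟨h1, h2⟩ hx0
      have hed : HasDerivAt (fun y : ℝ => Real.exp (β * y)) (Real.exp (β * x) * β) x := by
        simpa using (((hasDerivAt_id x).const_mul β).exp)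
      have := hgd.mul hed
      refine this.congr_deriv ?_
      simp only [hfun_def, hφ_def]
      ring
    have hsplit : (∫ x in (v - s)..v, (φ x + β * hfun x))
        = (∫ x in (v - s)..v, φ x) + β * (Ψ v - Ψ (v - s)) := by
      rw [intervalIntegral.integral_add (g := fun x => β * hfun x) (hφint _ _) ((continuous_const.mul hh).intervalIntegrable _ _),
        intervalIntegral.integral_const_mul]
      congr 1
      rw [← intervalIntegral.integral_interval_sub_left (hh.intervalIntegrable 0 v)
        (hh.intervalIntegrable 0 (v - s))]
    rw [hsplit] at hftc
    linarith
  -- Step D : change of variables for the target inner integral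
  have keyD : ∀ v : ℝ,
      Real.exp (β * (s - v)) * (∫ x in (v - s)..v, φ x)
        = H * (2 * H - 1) *
            ∫ u in (0:ℝ)..s, Real.exp (β * (s - u)) * |u - v| ^ (2 * H - 2) := by
    intro v
    have e1 : (∫ u in (0:ℝ)..s, Real.exp (β * (s - u)) * |u - v| ^ (2 * H - 2))
        = ∫ u in (0:ℝ)..s,
            (fun x => Real.exp (β * (s - v)) * (Real.exp (β * x) * |x| ^ (2 * H - 2))) (v - u) := by
      refine intervalIntegral.integral_congr fun u _ => ?_
      simp only []
      have heq : β * (s - u) = β * (s - v) + β * (v - u) := by ring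
      rw [abs_sub_comm u v, heq, Real.exp_add]
      ring
    rw [e1, intervalIntegral.integral_comp_sub_left
      (fun x => Real.exp (β * (s - v)) * (Real.exp (β * x) * |x| ^ (2 * H - 2))) v, sub_zero,
      intervalIntegral.integral_const_mul]
    have e2 : (∫ x in (v - s)..v, φ x)
        = H * (2 * H - 1) * ∫ x in (v - s)..v, Real.exp (β * x) * |x| ^ (2 * H - 2) := by
      rw [← intervalIntegral.integral_const_mul]
      refine intervalIntegral.integral_congr fun x _ => ?_
      simp only [hφ_def]
      ring
    rw [e2]
    ring
  -- derivative equals the nice integral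
  have keyE : ∀ v : ℝ,
      deriv (fun w : ℝ => ∫ u in (0:ℝ)..s,
          H * |w - u| ^ (2 * H - 1) * Real.sign (w - u) * Real.exp (β * (s - u))) v
        = H * (2 * H - 1) *
            ∫ u in (0:ℝ)..s, Real.exp (β * (s - u)) * |u - v| ^ (2 * H - 2) := by
    intro v
    rw [keyB v, ← keyC v, keyD v]
  have main : fOUkernel H β s t =
      H * (2 * H - 1) *
        ∫ v in (0:ℝ)..t, ∫ u in (0:ℝ)..s,
          Real.exp (β * (t - v)) * Real.exp (β * (s - u)) * |u - v| ^ (2 * H - 2) := by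
    rw [fOUkernel, ← intervalIntegral.integral_const_mul]
    refine intervalIntegral.integral_congr fun v _ => ?_
    rw [keyE v]
    have e3 : (∫ u in (0:ℝ)..s,
          Real.exp (β * (t - v)) * Real.exp (β * (s - u)) * |u - v| ^ (2 * H - 2))
        = Real.exp (β * (t - v)) *
            ∫ u in (0:ℝ)..s, Real.exp (β * (s - u)) * |u - v| ^ (2 * H - 2) := by
      rw [← intervalIntegral.integral_const_mul]
      refine intervalIntegral.integral_congr fun u _ => ?_
      ring
    rw [e3]
    ring
  refine ⟨main, ?_⟩
  have hexp : -(2 - 2 * H) = 2 * H - 2 := by ring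
  have hc : (1 - (2 - 2 * H) / 2) * (1 - (2 - 2 * H)) = H * (2 * H - 1) := by ring
  rw [hexp, hc]
  exact main
end

section
/- Let α ∈ (0,1). For every z ∈ ℂ with Im z > 0, ∫₀^∞ t^α/(t²−z²) dt = z^{α−1} · (π/(2·cos(πα/2))) · e^{(1−α)πi/2}, and for every z ∈ ℂ with Im z < 0, ∫₀^∞ t^α/(t²−z²) dt = z^{α−1} · (π/(2·cos(πα/2))) · e^{−(1−α)πi/2}, where z^{α−1} denotes the principal branch of the power function on ℂ∖(−∞,0]. -/
open Real Complex Set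
open MeasureTheory

lemma beta_Ioi {a : ℝ} (ha : a ∈ Set.Ioo (0:ℝ) 1) :
    ∫ u in Set.Ioi (0:ℝ), u ^ (a-1) / (1+u) = π / Real.sin (π * a) := by
  obtain ⟨ha0, ha1⟩ := ha
  -- change of variables f u = u / (1+u), image of Ioi 0 is Ioo 0 1
  set f : ℝ → ℝ := fun u => u / (1+u) with hf
  have himg : f '' Set.Ioi 0 = Set.Ioo (0:ℝ) 1 := by
    ext x
    constructor
    · rintro ⟨u, hu, rfl⟩
      have hu' : (0:ℝ) < u := hu
      constructor
      · positivity
      · rw [div_lt_one (by linarith)]; linarith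
    · rintro ⟨hx0, hx1⟩
      have h1 : (0:ℝ) < 1 - x := by linarith
      refine ⟨x / (1-x), by exact div_pos hx0 h1, ?_⟩
      simp only [hf]
      field_simp
      ring
  have hderiv : ∀ u ∈ Set.Ioi (0:ℝ), HasDerivWithinAt f ((1+u)^2)⁻¹ (Set.Ioi 0) u := by
    intro u hu
    have hu' : (0:ℝ) < u := hu
    have h : HasDerivAt f ((1*(1+u) - u*1)/((1+u)^2)) u := by
      exact HasDerivAt.div (hasDerivAt_id u) (by simpa using (hasDerivAt_id u).const_add (1:ℝ)) (by linarith)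
    refine h.hasDerivWithinAt.congr_deriv ?_
    ring
  have hinj : Set.InjOn f (Set.Ioi 0) := by
    intro u hu v hv huv
    have hu' : (0:ℝ) < u := hu
    have hv' : (0:ℝ) < v := hv
    have := huv
    rw [hf] at this
    field_simp at this
    linarith [this]
  have key := MeasureTheory.integral_image_eq_integral_abs_deriv_smul measurableSet_Ioi
    hderiv hinj (fun x => x ^ (a-1) * (1-x) ^ (-a))
  rw [himg] at key
  -- RHS of key equals our integral
  have hRHS : ∫ u in Set.Ioi (0:ℝ), |((1+u)^2)⁻¹| • (f u ^ (a-1) * (1 - f u) ^ (-a))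
      = ∫ u in Set.Ioi (0:ℝ), u ^ (a-1) / (1+u) := by
    apply setIntegral_congr_fun measurableSet_Ioi
    intro u hu
    have hu' : (0:ℝ) < u := hu
    have h1u : (0:ℝ) < 1 + u := by linarith
    have h2 : 1 - f u = (1+u)⁻¹ := by
      simp only [hf]; field_simp; ring
    have h3 : f u ^ (a-1) = u ^ (a-1) * ((1+u) ^ (a-1))⁻¹ := by
      simp only [hf]
      rw [Real.div_rpow hu'.le h1u.le, div_eq_mul_inv]
    show |((1+u)^2)⁻¹| • (f u ^ (a-1) * (1 - f u)^(-a)) = u ^ (a-1) / (1+u)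
    rw [h2, h3, Real.inv_rpow h1u.le, Real.rpow_neg h1u.le, inv_inv, smul_eq_mul]
    rw [_root_.abs_of_nonneg (by positivity)]
    have h4 : ((1+u:ℝ)^2)⁻¹ = (1+u)^(-2:ℝ) := by
      rw [← Real.rpow_natCast (1+u) 2, ← Real.rpow_neg h1u.le]; norm_num
    rw [h4, ← Real.rpow_neg h1u.le, eq_div_iff (by linarith : (1+u:ℝ) ≠ 0)]
    have h5 : (1+u:ℝ)^(-2:ℝ) * (u ^ (a-1) * (1+u)^(-(a-1)) * (1+u)^a) * (1+u)
        = u^(a-1) * ((1+u)^(-2:ℝ) * (1+u)^(-(a-1)) * (1+u)^a * (1+u)^(1:ℝ)) := by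
      rw [Real.rpow_one]; ring
    rw [h5, ← Real.rpow_add h1u, ← Real.rpow_add h1u, ← Real.rpow_add h1u,
      show (-2:ℝ)+ -(a-1) + a + 1 = 0 by ring, Real.rpow_zero, mul_one]
  rw [hRHS] at key
  -- identify the Ioo integral with the Beta integral
  have hbeta : ((∫ x in Set.Ioo (0:ℝ) 1, x ^ (a-1) * (1-x) ^ (-a) : ℝ) : ℂ)
      = Complex.betaIntegral a (1-a) := by
    rw [Complex.betaIntegral, intervalIntegral.integral_of_le zero_le_one,
      MeasureTheory.integral_Ioc_eq_integral_Ioo]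
    have hcon : ∀ x ∈ Set.Ioo (0:ℝ) 1,
        ((x:ℂ)) ^ ((a:ℂ) - 1) * ((1:ℂ) - (x:ℂ)) ^ ((1:ℂ) - (a:ℂ) - 1)
          = (((x ^ (a-1) * (1-x) ^ (-a) : ℝ)) : ℂ) := by
      intro x hx
      obtain ⟨hx0, hx1⟩ := hx
      have e1 : ((x:ℂ)) ^ ((a:ℂ) - 1) = ((x ^ (a-1) : ℝ) : ℂ) := by
        rw [show ((a:ℂ) - 1) = ((a - 1 : ℝ) : ℂ) by push_cast; ring,
          Complex.ofReal_cpow hx0.le]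
      have e2 : ((1:ℂ) - (x:ℂ)) ^ ((1:ℂ) - (a:ℂ) - 1) = (((1-x) ^ (-a) : ℝ) : ℂ) := by
        rw [show ((1:ℂ) - (x:ℂ)) = (((1 - x : ℝ)) : ℂ) by push_cast; ring,
          show ((1:ℂ) - (a:ℂ) - 1) = ((-a : ℝ) : ℂ) by push_cast; ring,
          Complex.ofReal_cpow (by linarith : (0:ℝ) ≤ 1 - x)]
      simp only [e1, e2, Complex.ofReal_mul]
    rw [setIntegral_congr_fun measurableSet_Ioo hcon]
    exact (integral_ofReal (𝕜 := ℂ)).symm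
  have hval : Complex.betaIntegral a (1-a) = (π : ℂ) / Complex.sin (π * a) := by
    have h1 : Complex.Gamma a * Complex.Gamma (1-a)
        = Complex.Gamma ((a:ℂ) + (1-a)) * Complex.betaIntegral a (1-a) :=
      Complex.Gamma_mul_Gamma_eq_betaIntegral (by simpa using ha0) (by simp; simpa using ha1)
    rw [show ((a:ℂ) + (1-a)) = 1 by ring, Complex.Gamma_one, one_mul] at h1
    rw [← h1, Complex.Gamma_mul_Gamma_one_sub]
  rw [← key]
  have h2 := hbeta.trans hval
  have hsin : Complex.sin ((π:ℂ) * (a:ℂ)) = ((Real.sin (π * a) : ℝ) : ℂ) := by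
    rw [← Complex.ofReal_mul, ← Complex.ofReal_sin]
  rw [hsin, show ((π:ℂ)) = ((π:ℝ):ℂ) from rfl, ← Complex.ofReal_div] at h2
  exact_mod_cast h2

lemma int_one_add_sq {α : ℝ} (hα : α ∈ Set.Ioo (0:ℝ) 1) :
    ∫ s in Set.Ioi (0:ℝ), s ^ α / (1 + s^2) = π / (2 * Real.cos (π * α / 2)) := by
  obtain ⟨h0, h1⟩ := hα
  set a : ℝ := (α + 1) / 2 with ha
  have haI : a ∈ Set.Ioo (0:ℝ) 1 := ⟨by rw [ha]; linarith, by rw [ha]; linarith⟩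
  have hbeta := beta_Ioi haI
  have hsub := MeasureTheory.integral_comp_rpow_Ioi_of_pos
    (g := fun y => y ^ (a - 1) / (1 + y)) (p := 2) two_pos
  rw [hbeta] at hsub
  have hcon : ∀ x ∈ Set.Ioi (0:ℝ),
      (2 * x ^ ((2:ℝ) - 1)) • ((x ^ (2:ℝ)) ^ (a-1) / (1 + x ^ (2:ℝ)))
        = 2 * (x ^ α / (1 + x^2)) := by
    intro x hx
    have hx' : (0:ℝ) < x := hx
    have e0 : x ^ (2:ℝ) = x ^ 2 := by
      rw [← Real.rpow_natCast x 2]; norm_num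
    have e1 : (x ^ (2:ℝ)) ^ (a - 1) = x ^ (α - 1) := by
      rw [← Real.rpow_mul hx'.le]
      congr 1
      rw [ha]; ring
    have e2 : x ^ ((2:ℝ) - 1) = x := by
      norm_num
    rw [e1, e0, e2, smul_eq_mul]
    have e3 : x ^ α = x ^ (1:ℝ) * x ^ (α-1) := by
      rw [← Real.rpow_add hx']; norm_num
    rw [e3, Real.rpow_one]; ring
  rw [setIntegral_congr_fun measurableSet_Ioi hcon] at hsub
  rw [MeasureTheory.integral_const_mul] at hsub
  have hcos : Real.sin (π * a) = Real.cos (π * α / 2) := by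
    rw [ha, show π * ((α + 1)/2) = π * α / 2 + π / 2 by ring, Real.sin_add_pi_div_two]
  rw [hcos] at hsub
  rw [show π / (2 * Real.cos (π * α / 2)) = (π / Real.cos (π * α / 2)) / 2 by ring]
  rw [← hsub]; ring

lemma int_sq_add_sq {α : ℝ} (hα : α ∈ Set.Ioo (0:ℝ) 1) {y : ℝ} (hy : 0 < y) :
    ∫ t in Set.Ioi (0:ℝ), t ^ α / (t^2 + y^2) = y ^ (α - 1) * (π / (2 * Real.cos (π * α / 2))) := by
  have h := MeasureTheory.integral_comp_mul_left_Ioi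
    (g := fun t => t ^ α / (t^2 + y^2)) 0 hy
  rw [mul_zero] at h
  have hcon : ∀ x ∈ Set.Ioi (0:ℝ),
      (y * x) ^ α / ((y*x)^2 + y^2) = y ^ (α - 2) * (x ^ α / (1 + x^2)) := by
    intro x hx
    have hx' : (0:ℝ) < x := hx
    rw [Real.mul_rpow hy.le hx'.le]
    have e1 : (y*x)^2 + y^2 = y^2 * (1 + x^2) := by ring
    have e2 : y ^ α = y ^ (α - 2) * y ^ (2:ℝ) := by
      rw [← Real.rpow_add hy]; norm_num
    have e3 : y ^ (2:ℝ) = y ^ 2 := by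
      rw [← Real.rpow_natCast y 2]; norm_num
    rw [e1, e2, e3]
    field_simp
  rw [setIntegral_congr_fun measurableSet_Ioi hcon, MeasureTheory.integral_const_mul,
    int_one_add_sq hα, smul_eq_mul] at h
  beta_reduce at h
  have h2 : ∫ t in Set.Ioi (0:ℝ), t ^ α / (t^2 + y^2)
      = y * (y ^ (α-2) * (π / (2 * Real.cos (π * α / 2)))) := by
    rw [h]; field_simp
  rw [h2, ← mul_assoc]
  congr 1
  rw [show (α-1) = 1 + (α-2) by ring, Real.rpow_add hy, Real.rpow_one]

lemma F_eq_G_on_axis {α : ℝ} (hα : α ∈ Set.Ioo (0:ℝ) 1) {y : ℝ} (hy : 0 < y) :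
    (∫ t in Set.Ioi (0:ℝ), ((t : ℂ) ^ (α : ℂ)) / ((t : ℂ) ^ 2 - ((y:ℂ)*Complex.I) ^ 2))
      = ((y:ℂ)*Complex.I) ^ ((α : ℂ) - 1) * ((π : ℂ) / (2 * Complex.cos (π * α / 2))) *
          Complex.exp ((1 - (α : ℂ)) * π * Complex.I / 2) := by
  obtain ⟨h0, h1⟩ := hα
  have hsq : ((y:ℂ)*Complex.I) ^ 2 = -((y:ℂ)^2) := by
    rw [mul_pow, Complex.I_sq]; ring
  have hL : (∫ t in Set.Ioi (0:ℝ), ((t : ℂ) ^ (α : ℂ)) / ((t : ℂ) ^ 2 - ((y:ℂ)*Complex.I) ^ 2))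
      = ((y ^ (α - 1) * (π / (2 * Real.cos (π * α / 2))) : ℝ) : ℂ) := by
    rw [← int_sq_add_sq ⟨h0, h1⟩ hy]
    have hcon : ∀ t ∈ Set.Ioi (0:ℝ),
        ((t : ℂ) ^ (α : ℂ)) / ((t : ℂ) ^ 2 - ((y:ℂ)*Complex.I) ^ 2)
          = ((t ^ α / (t^2 + y^2) : ℝ) : ℂ) := by
      intro t ht
      have ht' : (0:ℝ) < t := ht
      rw [hsq]
      push_cast [Complex.ofReal_cpow ht'.le]
      ring
    rw [setIntegral_congr_fun measurableSet_Ioi hcon]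
    exact integral_ofReal (𝕜 := ℂ)
  rw [hL]
  have hyne : ((y:ℂ)*Complex.I) ≠ 0 := by
    simp [Complex.I_ne_zero, hy.ne']
  have hlog : Complex.log ((y:ℂ)*Complex.I) = (Real.log y : ℂ) + (π/2 : ℝ) * Complex.I := by
    rw [Complex.log]
    have habs : ‖((y:ℂ)*Complex.I)‖ = y := by
      simp [abs_of_pos hy]
    have harg : Complex.arg ((y:ℂ)*Complex.I) = π/2 := by
      rw [Complex.arg_eq_pi_div_two_iff]
      constructor <;> simp [hy]
    rw [habs, harg]
  have hcpow : ((y:ℂ)*Complex.I) ^ ((α : ℂ) - 1)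
      = ((y ^ (α-1) : ℝ) : ℂ) * Complex.exp (((α:ℂ)-1) * π * Complex.I / 2) := by
    rw [Complex.cpow_def_of_ne_zero hyne, hlog]
    rw [show ((Real.log y : ℂ) + (π/2 : ℝ) * Complex.I) * ((α:ℂ)-1)
        = (((α-1) * Real.log y : ℝ) : ℂ) + ((α:ℂ)-1) * π * Complex.I / 2 by push_cast; ring]
    rw [Complex.exp_add]
    congr 1
    rw [Real.rpow_def_of_pos hy, ← Complex.ofReal_exp]
    congr 1
    ring
  have hcos : Complex.cos ((π:ℂ) * α / 2) = ((Real.cos (π * α / 2) : ℝ) : ℂ) := by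
    rw [show ((π:ℂ) * α / 2) = ((π * α / 2 : ℝ) : ℂ) by push_cast; ring,
      ← Complex.ofReal_cos]
  rw [hcpow, hcos]
  have hexp : Complex.exp (((α:ℂ)-1) * π * Complex.I / 2)
      * Complex.exp ((1 - (α : ℂ)) * π * Complex.I / 2) = 1 := by
    rw [← Complex.exp_add, show ((α:ℂ)-1) * π * Complex.I / 2
      + (1 - (α : ℂ)) * π * Complex.I / 2 = 0 by ring, Complex.exp_zero]
  rw [Complex.ofReal_mul, Complex.ofReal_div, Complex.ofReal_mul, Complex.ofReal_ofNat]
  calc ((y ^ (α-1) : ℝ):ℂ) * ((π:ℂ) / (2 * ((Real.cos (π * α / 2):ℝ):ℂ)))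
      = ((y ^ (α-1) : ℝ):ℂ) * ((π:ℂ) / (2 * ((Real.cos (π * α / 2):ℝ):ℂ)))
        * (Complex.exp (((α:ℂ)-1) * π * Complex.I / 2)
          * Complex.exp ((1 - (α : ℂ)) * π * Complex.I / 2)) := by rw [hexp, mul_one]
    _ = ((y ^ (α-1) : ℝ):ℂ) * Complex.exp (((α:ℂ)-1) * π * Complex.I / 2)
        * ((π:ℂ) / (2 * ((Real.cos (π * α / 2):ℝ):ℂ)))
        * Complex.exp ((1 - (α : ℂ)) * π * Complex.I / 2) := by ring

lemma denom_lb {z : ℂ} {δ M t : ℝ} (hδ : 0 < δ) (him : δ ≤ z.im) (habs : ‖z‖ ≤ M)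
    (ht : 0 < t) : (max δ (t - M))^2 ≤ ‖((t:ℂ)^2 - z^2)‖ := by
  have h1 : (t:ℂ)^2 - z^2 = ((t:ℂ) - z) * ((t:ℂ) + z) := by ring
  rw [h1, norm_mul, sq]
  have hrez : |z.re| ≤ M := (Complex.abs_re_le_norm z).trans habs
  have f1 : max δ (t-M) ≤ ‖((t:ℂ) - z)‖ := by
    apply max_le
    · calc δ ≤ z.im := him
        _ ≤ |((t:ℂ) - z).im| := by
            simp only [Complex.sub_im, Complex.ofReal_im, zero_sub, abs_neg]
            exact le_abs_self _
        _ ≤ ‖((t:ℂ) - z)‖ := Complex.abs_im_le_norm _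
    · calc t - M ≤ t - z.re := by
            have h2 := le_abs_self z.re; linarith
        _ ≤ |((t:ℂ) - z).re| := by
            simp only [Complex.sub_re, Complex.ofReal_re]
            exact le_abs_self _
        _ ≤ ‖((t:ℂ) - z)‖ := Complex.abs_re_le_norm _
  have f2 : max δ (t-M) ≤ ‖((t:ℂ) + z)‖ := by
    apply max_le
    · calc δ ≤ z.im := him
        _ ≤ |((t:ℂ) + z).im| := by
            simp only [Complex.add_im, Complex.ofReal_im, zero_add]
            exact le_abs_self _
        _ ≤ ‖((t:ℂ) + z)‖ := Complex.abs_im_le_norm _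
    · calc t - M ≤ t + z.re := by
            have h3 := neg_abs_le z.re; linarith
        _ ≤ |((t:ℂ) + z).re| := by
            simp only [Complex.add_re, Complex.ofReal_re]
            exact le_abs_self _
        _ ≤ ‖((t:ℂ) + z)‖ := Complex.abs_re_le_norm _
  have h0 : 0 ≤ max δ (t-M) := le_max_of_le_left hδ.le
  exact mul_le_mul f1 f2 h0 (h0.trans f1)

lemma aux_integrable {α δ M : ℝ} (hα : α ∈ Set.Ioo (0:ℝ) 1) (hδ : 0 < δ) (hM : 0 < M)
    {k : ℕ} (hk : 2 ≤ k) :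
    MeasureTheory.IntegrableOn (fun t => t ^ α / (max δ (t - M))^k) (Set.Ioi (0:ℝ)) := by
  obtain ⟨h0, h1⟩ := hα
  set T : ℝ := 2*M + 2*δ with hT
  have hT0 : (0:ℝ) < T := by positivity
  have hcont : Continuous (fun t : ℝ => t ^ α / (max δ (t - M))^k) := by
    apply Continuous.div
    · exact continuous_iff_continuousAt.2 (fun x => Real.continuousAt_rpow_const x α (Or.inr h0.le))
    · exact (continuous_const.max (continuous_id.sub continuous_const)).pow k
    · intro t
      have := hδ
      positivity
  have hmeas : MeasureTheory.AEStronglyMeasurable (fun t => t ^ α / (max δ (t - M))^k)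
      (MeasureTheory.volume.restrict (Set.Ioi (0:ℝ))) := hcont.aestronglyMeasurable
  have hmax_pos : ∀ t : ℝ, (0:ℝ) < max δ (t - M) := fun t => lt_max_of_lt_left hδ
  have part1 : MeasureTheory.IntegrableOn (fun t => t ^ α / (max δ (t - M))^k)
      (Set.Ioc (0:ℝ) T) := by
    have hbig : MeasureTheory.IntegrableOn (fun t => t ^ α * (δ^k)⁻¹) (Set.Ioc (0:ℝ) T) := by
      apply MeasureTheory.Integrable.mul_const
      exact (intervalIntegral.intervalIntegrable_rpow' (by linarith)).1
    apply hbig.mono' (hmeas.mono_set Set.Ioc_subset_Ioi_self)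
    filter_upwards [MeasureTheory.ae_restrict_mem measurableSet_Ioc] with t ht
    obtain ⟨ht0, htT⟩ := ht
    rw [Real.norm_eq_abs, _root_.abs_of_nonneg (by positivity)]
    rw [div_eq_mul_inv]
    apply mul_le_mul_of_nonneg_left _ (Real.rpow_nonneg ht0.le α)
    apply inv_anti₀ (by positivity)
    exact pow_le_pow_left₀ hδ.le (le_max_left _ _) k
  have part2 : MeasureTheory.IntegrableOn (fun t => t ^ α / (max δ (t - M))^k)
      (Set.Ioi T) := by
    have hbig : MeasureTheory.IntegrableOn (fun t => (2:ℝ)^k * t ^ (α - k)) (Set.Ioi T) := by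
      exact (integrableOn_Ioi_rpow_of_lt (by
        have : (2:ℝ) ≤ (k:ℝ) := by exact_mod_cast hk
        linarith) hT0).const_mul _
    apply hbig.mono' (hmeas.mono_set (fun t ht => lt_trans hT0 ht))
    filter_upwards [MeasureTheory.ae_restrict_mem measurableSet_Ioi] with t ht
    have htT : T < t := ht
    have ht0 : (0:ℝ) < t := lt_trans hT0 htT
    rw [Real.norm_eq_abs, _root_.abs_of_nonneg (by positivity)]
    have hhalf : t / 2 ≤ max δ (t - M) := by
      apply le_max_of_le_right
      rw [hT] at htT
      linarith
    have hb : (t/2)^k ≤ (max δ (t - M))^k := pow_le_pow_left₀ (by positivity) hhalf k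
    calc t ^ α / (max δ (t - M))^k ≤ t ^ α / (t/2)^k := by
          apply div_le_div_of_nonneg_left (Real.rpow_nonneg ht0.le α) (by positivity) hb
      _ = (2:ℝ)^k * t ^ (α - k) := by
          rw [div_pow, Real.rpow_sub ht0, Real.rpow_natCast, div_div_eq_mul_div]
          ring
  have : MeasureTheory.IntegrableOn (fun t => t ^ α / (max δ (t - M))^k)
      (Set.Ioc (0:ℝ) T ∪ Set.Ioi T) := part1.union part2
  apply this.mono_set
  intro t ht
  rcases le_or_gt t T with h | h
  · exact Or.inl ⟨ht, h⟩
  · exact Or.inr h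

lemma cpow_cont_on {α : ℝ} : ContinuousOn (fun t : ℝ => ((t:ℂ) ^ (α:ℂ))) (Set.Ioi (0:ℝ)) := by
  intro t ht
  have ht' : (0:ℝ) < t := ht
  apply ContinuousAt.continuousWithinAt
  exact (continuousAt_cpow_const (by
    exact Complex.mem_slitPlane_iff.2 (Or.inl (by simpa using ht')))).comp
    Complex.continuous_ofReal.continuousAt

lemma abs_cpow_pos {α t : ℝ} (ht : 0 < t) : ‖((t:ℂ) ^ (α:ℂ))‖ = t ^ α :=
  Complex.norm_cpow_eq_rpow_re_of_pos ht _

lemma F_differentiableAt {α : ℝ} (hα : α ∈ Set.Ioo (0:ℝ) 1) {z₀ : ℂ} (hz : 0 < z₀.im) :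
    DifferentiableAt ℂ
      (fun z => ∫ t in Set.Ioi (0:ℝ), ((t:ℂ) ^ (α:ℂ)) / ((t:ℂ)^2 - z^2)) z₀ := by
  obtain ⟨h0, h1⟩ := hα
  set δ : ℝ := z₀.im / 2 with hδdef
  have hδ : 0 < δ := by rw [hδdef]; positivity
  set M : ℝ := ‖z₀‖ + δ with hMdef
  have hM : 0 < M := add_pos_of_nonneg_of_pos (norm_nonneg _) hδ
  have hball : ∀ z ∈ Metric.ball z₀ δ, δ ≤ z.im ∧ ‖z‖ ≤ M := by
    intro z hz'
    rw [Metric.mem_ball, Complex.dist_eq] at hz'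
    constructor
    · have h2 : |z.im - z₀.im| ≤ ‖(z - z₀)‖ := by
        rw [← Complex.sub_im]; exact Complex.abs_im_le_norm _
      have h3 : z₀.im - z.im ≤ |z.im - z₀.im| := by
        rw [abs_sub_comm]; exact le_abs_self _
      have h4 : z₀.im = 2 * δ := by rw [hδdef]; ring
      linarith
    · have h2 : ‖z‖ - ‖z₀‖ ≤ ‖(z - z₀)‖ := by
        simpa using norm_sub_norm_le z z₀
      rw [hMdef]; linarith
  have hlb : ∀ t ∈ Set.Ioi (0:ℝ), ∀ z ∈ Metric.ball z₀ δ,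
      (max δ (t - M))^2 ≤ ‖((t:ℂ)^2 - z^2)‖ := by
    intro t ht z hz'
    exact denom_lb hδ (hball z hz').1 (hball z hz').2 ht
  have hmaxpos : ∀ t : ℝ, (0:ℝ) < max δ (t - M) := fun t => lt_max_of_lt_left hδ
  have hne : ∀ t ∈ Set.Ioi (0:ℝ), ∀ z ∈ Metric.ball z₀ δ, ((t:ℂ)^2 - z^2) ≠ 0 := by
    intro t ht z hz'
    intro hcon
    have := hlb t ht z hz'
    rw [hcon, norm_zero] at this
    nlinarith [hmaxpos t]
  set Fc : ℂ → ℝ → ℂ := fun z t => ((t:ℂ) ^ (α:ℂ)) / ((t:ℂ)^2 - z^2) with hFc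
  set Fc' : ℂ → ℝ → ℂ := fun z t => ((t:ℂ) ^ (α:ℂ)) * (2*z) / (((t:ℂ)^2 - z^2)^2) with hFc'
  have hcontF : ∀ z ∈ Metric.ball z₀ δ, MeasureTheory.AEStronglyMeasurable (Fc z)
      (MeasureTheory.volume.restrict (Set.Ioi (0:ℝ))) := by
    intro z hz'
    apply ContinuousOn.aestronglyMeasurable _ measurableSet_Ioi
    apply ContinuousOn.div cpow_cont_on
    · exact Continuous.continuousOn (by continuity)
    · intro t ht; exact hne t ht z hz'
  have hz₀ball : z₀ ∈ Metric.ball z₀ δ := Metric.mem_ball_self hδ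
  have hF_meas : ∀ᶠ z in nhds z₀, MeasureTheory.AEStronglyMeasurable (Fc z)
      (MeasureTheory.volume.restrict (Set.Ioi (0:ℝ))) := by
    filter_upwards [Metric.ball_mem_nhds z₀ hδ] with z hz' using hcontF z hz'
  have hF_int : MeasureTheory.Integrable (Fc z₀)
      (MeasureTheory.volume.restrict (Set.Ioi (0:ℝ))) := by
    apply MeasureTheory.Integrable.mono'
      (aux_integrable ⟨h0, h1⟩ hδ hM (le_refl 2)) (hcontF z₀ hz₀ball)
    filter_upwards [MeasureTheory.ae_restrict_mem measurableSet_Ioi] with t ht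
    have ht' : (0:ℝ) < t := ht
    rw [hFc]
    simp only [norm_div]
    rw [abs_cpow_pos ht']
    apply div_le_div_of_nonneg_left (Real.rpow_nonneg ht'.le α) (by nlinarith [hmaxpos t])
      (hlb t ht z₀ hz₀ball)
  have hF'_meas : MeasureTheory.AEStronglyMeasurable (Fc' z₀)
      (MeasureTheory.volume.restrict (Set.Ioi (0:ℝ))) := by
    apply ContinuousOn.aestronglyMeasurable _ measurableSet_Ioi
    apply ContinuousOn.div (cpow_cont_on.mul continuousOn_const)
    · exact Continuous.continuousOn (by continuity)
    · intro t ht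
      exact pow_ne_zero 2 (hne t ht z₀ hz₀ball)
  have h_bound : ∀ᵐ t ∂(MeasureTheory.volume.restrict (Set.Ioi (0:ℝ))),
      ∀ z ∈ Metric.ball z₀ δ, ‖Fc' z t‖ ≤ (2*M) * (t ^ α / (max δ (t - M))^4) := by
    filter_upwards [MeasureTheory.ae_restrict_mem measurableSet_Ioi] with t ht
    intro z hz'
    have ht' : (0:ℝ) < t := ht
    rw [hFc']
    simp only [norm_div, norm_mul, norm_pow]
    rw [abs_cpow_pos ht']
    have habsz : ‖z‖ ≤ M := (hball z hz').2
    have hden : (max δ (t - M))^4 ≤ (‖((t:ℂ)^2 - z^2)‖)^2 := by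
      calc (max δ (t - M))^4 = ((max δ (t - M))^2)^2 := by ring
        _ ≤ (‖((t:ℂ)^2 - z^2)‖)^2 := by
            apply pow_le_pow_left₀ (by positivity) (hlb t ht z hz')
    have habs2z : ‖(2:ℂ)‖ * ‖z‖ ≤ 2*M := by
      rw [show ‖(2:ℂ)‖ = 2 by simp]
      nlinarith
    calc t ^ α * (‖(2:ℂ)‖ * ‖z‖) / (‖((t:ℂ)^2 - z^2)‖)^2
        ≤ t ^ α * (2*M) / (max δ (t - M))^4 := by
          apply div_le_div₀ (by positivity)
          · exact mul_le_mul_of_nonneg_left habs2z (Real.rpow_nonneg ht'.le α)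
          · positivity
          · exact hden
      _ = (2*M) * (t ^ α / (max δ (t - M))^4) := by ring
  have hbound_int : MeasureTheory.Integrable (fun t => (2*M) * (t ^ α / (max δ (t - M))^4))
      (MeasureTheory.volume.restrict (Set.Ioi (0:ℝ))) :=
    (aux_integrable ⟨h0, h1⟩ hδ hM (by norm_num)).const_mul _
  have h_diff : ∀ᵐ t ∂(MeasureTheory.volume.restrict (Set.Ioi (0:ℝ))),
      ∀ z ∈ Metric.ball z₀ δ, HasDerivAt (fun z => Fc z t) (Fc' z t) z := by
    filter_upwards [MeasureTheory.ae_restrict_mem measurableSet_Ioi] with t ht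
    intro z hz'
    have hden := hne t ht z hz'
    have hd : HasDerivAt (fun z : ℂ => (t:ℂ)^2 - z^2) (-(2*z)) z := by
      have := (hasDerivAt_pow 2 z).const_sub ((t:ℂ)^2)
      simpa using this
    have := (hasDerivAt_const z ((t:ℂ) ^ (α:ℂ))).div hd hden
    refine this.congr_deriv ?_
    rw [hFc']
    field_simp
    ring
  have := (hasDerivAt_integral_of_dominated_loc_of_deriv_le (Metric.ball_mem_nhds z₀ hδ) hF_meas hF_int
    hF'_meas h_bound hbound_int h_diff).2
  exact this.differentiableAt

/-- Evaluation of `∫₀^∞ t^α/(t²−z²) dt` for `z` in the upper and lower half-planes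
(`z^{α−1}` is the principal branch). -/
theorem integral_tpow_div_sq_sub_sq
    (α : ℝ) (hα : α ∈ Set.Ioo (0:ℝ) 1) (z : ℂ) :
    (0 < z.im →
      (∫ t in Set.Ioi (0:ℝ), ((t : ℂ) ^ (α : ℂ)) / ((t : ℂ) ^ 2 - z ^ 2))
        = z ^ ((α : ℂ) - 1) * ((π : ℂ) / (2 * Complex.cos (π * α / 2))) *
            Complex.exp ((1 - (α : ℂ)) * π * Complex.I / 2)) ∧
    (z.im < 0 →
      (∫ t in Set.Ioi (0:ℝ), ((t : ℂ) ^ (α : ℂ)) / ((t : ℂ) ^ 2 - z ^ 2))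
        = z ^ ((α : ℂ) - 1) * ((π : ℂ) / (2 * Complex.cos (π * α / 2))) *
            Complex.exp (-((1 - (α : ℂ)) * π * Complex.I / 2))) := by
  obtain ⟨h0, h1⟩ := hα
  set F : ℂ → ℂ := fun w => ∫ t in Set.Ioi (0:ℝ), ((t : ℂ) ^ (α : ℂ)) / ((t : ℂ) ^ 2 - w ^ 2)
    with hF
  set G : ℂ → ℂ := fun w => w ^ ((α : ℂ) - 1) * ((π : ℂ) / (2 * Complex.cos (π * α / 2))) *
    Complex.exp ((1 - (α : ℂ)) * π * Complex.I / 2) with hG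
  have hupper : ∀ w : ℂ, 0 < w.im → F w = G w := by
    set U : Set ℂ := {w : ℂ | 0 < w.im} with hU
    have hUopen : IsOpen U := isOpen_Ioi.preimage Complex.continuous_im
    have hAF : AnalyticOnNhd ℂ F U := by
      apply DifferentiableOn.analyticOnNhd _ hUopen
      exact fun w hw => (F_differentiableAt ⟨h0, h1⟩ hw).differentiableWithinAt
    have hAG : AnalyticOnNhd ℂ G U := by
      apply DifferentiableOn.analyticOnNhd _ hUopen
      intro w hw
      apply DifferentiableAt.differentiableWithinAt
      apply DifferentiableAt.mul
      apply DifferentiableAt.mul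
      · refine DifferentiableAt.cpow differentiableAt_id (differentiableAt_const _) ?_
        exact Complex.mem_slitPlane_iff.2 (Or.inr (ne_of_gt hw))
      · exact differentiableAt_const _
      · exact differentiableAt_const _
    have hIU : Complex.I ∈ U := by
      simp only [hU, Set.mem_setOf_eq, Complex.I_im]
      norm_num
    have hfreq : ∃ᶠ w in nhdsWithin Complex.I {Complex.I}ᶜ, F w = G w := by
      have htend : Filter.Tendsto (fun n : ℕ => ((1 + 1/((n:ℝ)+1) : ℝ) : ℂ) * Complex.I)
          Filter.atTop (nhdsWithin Complex.I {Complex.I}ᶜ) := by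
        rw [tendsto_nhdsWithin_iff]
        constructor
        · have hr : Filter.Tendsto (fun n : ℕ => (1 + 1/((n:ℝ)+1) : ℝ))
              Filter.atTop (nhds 1) := by
            have h := tendsto_one_div_add_atTop_nhds_zero_nat (𝕜 := ℝ)
            have := Filter.Tendsto.add (tendsto_const_nhds (x := (1:ℝ))) h
            simpa using this
          have h2 := (Complex.continuous_ofReal.tendsto 1).comp hr
          have h3 := Filter.Tendsto.mul h2 (tendsto_const_nhds (x := Complex.I))
          simpa using h3
        · apply Filter.Eventually.of_forall
          intro n
          simp only [Set.mem_compl_iff, Set.mem_singleton_iff]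
          intro hcon
          have hIne : Complex.I ≠ 0 := Complex.I_ne_zero
          have : ((1 + 1/((n:ℝ)+1) : ℝ) : ℂ) = 1 := by
            have := mul_right_cancel₀ hIne (hcon.trans (one_mul Complex.I).symm)
            exact this
          have h5 : (1 + 1/((n:ℝ)+1) : ℝ) = 1 := by exact_mod_cast this
          have : (0:ℝ) < 1/((n:ℝ)+1) := by positivity
          linarith
      apply htend.frequently
      apply Filter.Frequently.of_forall
      intro n
      have hy : (0:ℝ) < 1 + 1/((n:ℝ)+1) := by positivity
      exact F_eq_G_on_axis ⟨h0, h1⟩ hy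
    have hconn : IsPreconnected U := (convex_halfSpace_im_gt 0).isPreconnected
    exact fun w hw => hAF.eqOn_of_preconnected_of_frequently_eq hAG hconn hIU hfreq hw
  constructor
  · intro him
    exact hupper z him
  · intro him
    set w : ℂ := (starRingEnd ℂ) z with hw
    have hwim : 0 < w.im := by
      rw [hw, Complex.conj_im]; linarith
    have hGw := hupper w hwim
    have hFz : F z = (starRingEnd ℂ) (F w) := by
      rw [hF]
      simp only
      rw [← integral_conj]
      apply setIntegral_congr_fun measurableSet_Ioi
      intro t ht
      have ht' : (0:ℝ) < t := ht
      show ((t:ℂ) ^ (α:ℂ)) / ((t:ℂ)^2 - z^2)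
        = (starRingEnd ℂ) (((t:ℂ) ^ (α:ℂ)) / ((t:ℂ)^2 - w^2))
      rw [map_div₀]
      congr 1
      · rw [← Complex.ofReal_cpow ht'.le, Complex.conj_ofReal]
      · rw [map_sub, map_pow, map_pow, Complex.conj_ofReal, hw,
          Complex.conj_conj]
    have harg : w.arg ≠ π := by
      intro hcon
      rw [Complex.arg_eq_pi_iff] at hcon
      exact (ne_of_gt hwim) hcon.2
    have hconj_pow : (starRingEnd ℂ) (w ^ ((α : ℂ) - 1)) = z ^ ((α : ℂ) - 1) := by
      have hsreal : (starRingEnd ℂ) ((α : ℂ) - 1) = (α : ℂ) - 1 := by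
        rw [map_sub, Complex.conj_ofReal, map_one]
      have := Complex.conj_cpow w ((α : ℂ) - 1) harg
      rw [hsreal] at this
      rw [← this, hw, Complex.conj_conj]
    have hcosR : Complex.cos ((π:ℂ) * α / 2) = ((Real.cos (π * α / 2) : ℝ) : ℂ) := by
      rw [show ((π:ℂ) * α / 2) = ((π * α / 2 : ℝ) : ℂ) by push_cast; ring,
        ← Complex.ofReal_cos]
    have h2c : (starRingEnd ℂ) (2:ℂ) = 2 := by
      rw [show (2:ℂ) = ((2:ℝ):ℂ) by norm_num, Complex.conj_ofReal]
    have h3c : (starRingEnd ℂ) (Complex.cos ((π:ℂ) * α / 2)) = Complex.cos ((π:ℂ) * α / 2) := by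
      rw [hcosR, Complex.conj_ofReal]
    have hconj_C : (starRingEnd ℂ) ((π : ℂ) / (2 * Complex.cos (π * α / 2)))
        = (π : ℂ) / (2 * Complex.cos (π * α / 2)) := by
      rw [map_div₀, map_mul, Complex.conj_ofReal, h3c, h2c]
    have hconj_exp : (starRingEnd ℂ) (Complex.exp ((1 - (α : ℂ)) * π * Complex.I / 2))
        = Complex.exp (-((1 - (α : ℂ)) * π * Complex.I / 2)) := by
      rw [← Complex.exp_conj]
      congr 1
      simp only [map_div₀, map_mul, map_sub, map_one, Complex.conj_ofReal,
        Complex.conj_I, h2c]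
      ring
    show F z = _
    rw [hFz, hGw, hG]
    simp only
    rw [map_mul, map_mul, hconj_pow, hconj_C, hconj_exp]
end

section
/- Let H ∈ (0,1), a, b, C₁, C₂, M > 0, and let (ℓ_n)_{n≥1} be a sequence of positive reals with |ℓ_{n+1} − ℓ_n| ≤ C₁·n^{2H} and ℓ_n ≥ C₂·n^{2H+1} for all n ≥ 1. Let (S_n)_{n≥0} be a real sequence with S₀ = 0 and |S_n| ≤ M for all n. Then there exists C > 0 such that for all ε ∈ (0,1], the series Σ_{n≥1} ( ε·a / (ε·ℓ_n + b) )·(S_n − S_{n−1}) converges absolutely and | Σ_{n=1}^∞ ( ε·a / (ε·ℓ_n + b) )·(S_n − S_{n−1}) | ≤ C·ε. -/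
open Real Set Filter

/-- Bernoulli-type lower bound: `(x+1)^{2H+1} - x^{2H+1} ≥ x^{2H}` for `x ≥ 1`, `H ≥ 0`. -/
lemma abel_aux_bernoulli {H x : ℝ} (hH : 0 ≤ H) (hx : 1 ≤ x) :
    x ^ (2*H) ≤ (x+1) ^ (2*H+1) - x ^ (2*H+1) := by
  have hx0 : (0:ℝ) < x := lt_of_lt_of_le one_pos hx
  have hp1 : (1:ℝ) ≤ 2*H+1 := by linarith
  have hsx : (0:ℝ) ≤ 1/x := by positivity
  have h1 : (1:ℝ) + (2*H+1) * (1/x) ≤ (1 + 1/x) ^ (2*H+1) :=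
    one_add_mul_self_le_rpow_one_add (by linarith) hp1
  have h3 : ((1+1/x) * x) = x + 1 := by field_simp
  have h2 : (x+1) ^ (2*H+1) = (1+1/x) ^ (2*H+1) * x ^ (2*H+1) := by
    rw [← h3, Real.mul_rpow (by positivity) hx0.le]
  have h4 : x ^ (2*H) = x ^ (2*H+1) / x := by
    rw [Real.rpow_add hx0, Real.rpow_one]
    field_simp
  have h5 : x ^ (2*H+1) + (2*H+1) * (x ^ (2*H+1) / x) ≤ (x+1) ^ (2*H+1) := by
    rw [h2]
    have hmul := mul_le_mul_of_nonneg_right h1 (Real.rpow_nonneg hx0.le (2*H+1))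
    calc x ^ (2*H+1) + (2*H+1) * (x ^ (2*H+1) / x)
        = (1 + (2*H+1) * (1/x)) * x ^ (2*H+1) := by field_simp
      _ ≤ (1+1/x) ^ (2*H+1) * x ^ (2*H+1) := hmul
  have h7 : 0 ≤ x ^ (2*H+1) / x := by positivity
  rw [h4]
  nlinarith [h5, h7]

set_option maxHeartbeats 2000000 in
/-- Abel-summation estimate: if `ℓ_n ≥ C₂ n^{2H+1}`, `|ℓ_{n+1} − ℓ_n| ≤ C₁ n^{2H}` and
`(S_n)` is bounded with `S₀ = 0`, then `Σ_{n≥1} (εa/(εℓ_n + b))(S_n − S_{n−1}) = O(ε)`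
uniformly over `ε ∈ (0,1]`. -/
theorem abel_summation_estimate
    (H a b C₁ C₂ M : ℝ) (hH : H ∈ Set.Ioo (0:ℝ) 1)
    (ha : 0 < a) (hb : 0 < b) (hC₁ : 0 < C₁) (hC₂ : 0 < C₂) (hM : 0 < M)
    (ℓ : ℕ → ℝ) (hℓpos : ∀ n : ℕ, 1 ≤ n → 0 < ℓ n)
    (hdiff : ∀ n : ℕ, 1 ≤ n → |ℓ (n + 1) - ℓ n| ≤ C₁ * (n : ℝ) ^ (2 * H))
    (hlow : ∀ n : ℕ, 1 ≤ n → C₂ * (n : ℝ) ^ (2 * H + 1) ≤ ℓ n)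
    (S : ℕ → ℝ) (hS0 : S 0 = 0) (hSb : ∀ n : ℕ, |S n| ≤ M) :
    ∃ C : ℝ, 0 < C ∧ ∀ ε : ℝ, ε ∈ Set.Ioc (0:ℝ) 1 →
      Summable (fun n : ℕ => |ε * a / (ε * ℓ (n + 1) + b) * (S (n + 1) - S n)|) ∧
      |∑' n : ℕ, ε * a / (ε * ℓ (n + 1) + b) * (S (n + 1) - S n)| ≤ C * ε := by
  obtain ⟨hH0, hH1⟩ := hH
  have hplt : (1:ℝ) < 2*H + 1 := by linarith
  have hp0 : (0:ℝ) < 2*H + 1 := by linarith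
  refine ⟨M*a*C₁/(C₂*b) + 1, by positivity, ?_⟩
  rintro ε ⟨hε0, hε1⟩
  set g : ℕ → ℝ := fun n => ε * a / (ε * ℓ (n+1) + b) with hg
  set τ : ℕ → ℝ := fun n => (ε * C₂ * ((n:ℝ)+1) ^ (2*H+1) + b)⁻¹ with hτ
  have hden : ∀ n : ℕ, 0 < ε * ℓ (n+1) + b := by
    intro n
    have h := hℓpos (n+1) (Nat.le_add_left 1 n)
    positivity
  have hlow' : ∀ n : ℕ, C₂ * ((n:ℝ)+1) ^ (2*H+1) ≤ ℓ (n+1) := by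
    intro n
    have h := hlow (n+1) (Nat.le_add_left 1 n)
    rwa [Nat.cast_add, Nat.cast_one] at h
  have hgpos : ∀ n : ℕ, 0 < g n := fun n => div_pos (by positivity) (hden n)
  have hgle : ∀ n : ℕ, g n ≤ a / (C₂ * ((n:ℝ)+1) ^ (2*H+1)) := by
    intro n
    have hnp : (0:ℝ) < ((n:ℝ)+1) ^ (2*H+1) := by positivity
    simp only [hg]
    rw [div_le_div_iff₀ (hden n) (by positivity)]
    have h := mul_le_mul_of_nonneg_left (hlow' n) hε0.le
    linarith [mul_pos ha hb, mul_le_mul_of_nonneg_left h ha.le]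
  -- summability of the majorant (n+1)^{-(2H+1)}
  have hmaj0 : Summable (fun n : ℕ => (((n:ℝ)+1) ^ (2*H+1))⁻¹) := by
    have h := Real.summable_nat_rpow_inv.mpr hplt
    have h2 : Summable (fun n : ℕ => ((((n+1:ℕ)):ℝ) ^ (2*H+1))⁻¹) :=
      (summable_nat_add_iff 1).mpr h
    exact h2.congr fun n => by push_cast; ring_nf
  -- first conjunct: absolute summability
  have habs2M : ∀ n : ℕ, |S (n+1) - S n| ≤ 2*M := by
    intro n
    calc |S (n+1) - S n| ≤ |S (n+1)| + |S n| := abs_sub _ _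
      _ ≤ M + M := add_le_add (hSb _) (hSb _)
      _ = 2*M := by ring
  have ht_abs : Summable (fun n : ℕ => |g n * (S (n + 1) - S n)|) := by
    refine Summable.of_nonneg_of_le (fun n => abs_nonneg _) (fun n => ?_)
      (hmaj0.mul_left (2*M*a/C₂))
    rw [abs_mul, abs_of_pos (hgpos n)]
    have hnp : (0:ℝ) < ((n:ℝ)+1) ^ (2*H+1) := by positivity
    calc g n * |S (n+1) - S n|
        ≤ (a / (C₂ * ((n:ℝ)+1) ^ (2*H+1))) * (2*M) :=
          mul_le_mul (hgle n) (habs2M n) (abs_nonneg _) (by positivity)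
      _ = (2*M*a/C₂) * (((n:ℝ)+1) ^ (2*H+1))⁻¹ := by field_simp
  have ht : Summable (fun n : ℕ => g n * (S (n + 1) - S n)) := summable_abs_iff.mp ht_abs
  -- telescope basics
  have hDpos : ∀ n : ℕ, 0 < ε * C₂ * ((n:ℝ)+1) ^ (2*H+1) + b := fun n => by positivity
  have hτ1 : ∀ n : ℕ, τ (n+1) = (ε * C₂ * (((n:ℝ)+1)+1) ^ (2*H+1) + b)⁻¹ := by
    intro n
    simp only [hτ]
    push_cast
    ring_nf
  have hτ_anti : ∀ n : ℕ, τ (n+1) ≤ τ n := by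
    intro n
    rw [hτ1 n]
    simp only [hτ]
    apply inv_anti₀ (hDpos n)
    have h : ((n:ℝ)+1) ^ (2*H+1) ≤ (((n:ℝ)+1)+1) ^ (2*H+1) :=
      Real.rpow_le_rpow (by positivity) (by linarith) hp0.le
    linarith [mul_le_mul_of_nonneg_left h (by positivity : (0:ℝ) ≤ ε * C₂)]
  have hτ_nonneg : ∀ n : ℕ, 0 ≤ τ n - τ (n+1) := fun n => sub_nonneg.2 (hτ_anti n)
  have hτpos : ∀ n : ℕ, 0 < τ n := fun n => by simp only [hτ]; positivity
  have hτ0le : τ 0 ≤ 1/b := by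
    simp only [hτ, Nat.cast_zero, zero_add, one_div, Real.one_rpow, mul_one]
    apply inv_anti₀ hb
    linarith [mul_pos hε0 hC₂]
  have hpart_le : ∀ N : ℕ, ∑ i ∈ Finset.range N, (τ i - τ (i+1)) ≤ 1/b := by
    intro N
    rw [Finset.sum_range_sub' τ N]
    have := hτpos N
    linarith [hτ0le]
  have hτsum : Summable (fun n : ℕ => τ n - τ (n+1)) :=
    summable_of_sum_range_le hτ_nonneg hpart_le
  have hτtsum : ∑' n : ℕ, (τ n - τ (n+1)) ≤ 1/b :=
    Real.tsum_le_of_sum_range_le hτ_nonneg hpart_le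
  -- key Abel bound on |g n - g (n+1)|
  have hkey : ∀ n : ℕ, |g n - g (n+1)| ≤ (a*C₁/C₂) * ε * (τ n - τ (n+1)) := by
    intro n
    have hn11 : (1:ℝ) ≤ (n:ℝ) + 1 := by
      have := Nat.cast_nonneg (α := ℝ) n
      linarith
    have hA : 0 < ε * ℓ (n+1) + b := hden n
    have hB : 0 < ε * ℓ (n+2) + b := hden (n+1)
    have hDn : 0 < ε * C₂ * ((n:ℝ)+1) ^ (2*H+1) + b := hDpos n
    have hDn1 : 0 < ε * C₂ * (((n:ℝ)+1)+1) ^ (2*H+1) + b := by positivity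
    have hgd : g n - g (n+1) =
        ε^2 * a * (ℓ (n+2) - ℓ (n+1)) / ((ε * ℓ (n+1) + b) * (ε * ℓ (n+2) + b)) := by
      simp only [hg]
      show ε * a / (ε * ℓ (n+1) + b) - ε * a / (ε * ℓ (n+2) + b) = _
      rw [div_sub_div _ _ (ne_of_gt hA) (ne_of_gt hB)]
      congr 1
      ring
    have habsd : |g n - g (n+1)| =
        ε^2 * a * |ℓ (n+2) - ℓ (n+1)| / ((ε * ℓ (n+1) + b) * (ε * ℓ (n+2) + b)) := by
      rw [hgd, abs_div, abs_mul, abs_of_pos (by positivity : (0:ℝ) < ε^2*a),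
        abs_of_pos (mul_pos hA hB)]
    have hΔℓ : |ℓ (n+2) - ℓ (n+1)| ≤ C₁ * ((n:ℝ)+1) ^ (2*H) := by
      have h := hdiff (n+1) (Nat.le_add_left 1 n)
      have hcast : ((n+1:ℕ):ℝ) = (n:ℝ) + 1 := by push_cast; ring
      rw [hcast] at h
      exact_mod_cast h
    have hDA : ε * C₂ * ((n:ℝ)+1) ^ (2*H+1) + b ≤ ε * ℓ (n+1) + b := by
      have h := mul_le_mul_of_nonneg_left (hlow' n) hε0.le
      linarith
    have hDB : ε * C₂ * (((n:ℝ)+1)+1) ^ (2*H+1) + b ≤ ε * ℓ (n+2) + b := by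
      have h := hlow' (n+1)
      have hcast : ((n+1:ℕ):ℝ) + 1 = ((n:ℝ) + 1) + 1 := by push_cast; ring
      rw [hcast] at h
      have h2 := mul_le_mul_of_nonneg_left h hε0.le
      linarith
    have hABprod : (ε * C₂ * ((n:ℝ)+1) ^ (2*H+1) + b) * (ε * C₂ * (((n:ℝ)+1)+1) ^ (2*H+1) + b)
        ≤ (ε * ℓ (n+1) + b) * (ε * ℓ (n+2) + b) :=
      mul_le_mul hDA hDB hDn1.le hA.le
    have hτd : τ n - τ (n+1) =
        ((ε * C₂ * (((n:ℝ)+1)+1) ^ (2*H+1) + b) - (ε * C₂ * ((n:ℝ)+1) ^ (2*H+1) + b)) /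
          ((ε * C₂ * ((n:ℝ)+1) ^ (2*H+1) + b) * (ε * C₂ * (((n:ℝ)+1)+1) ^ (2*H+1) + b)) := by
      rw [hτ1 n]
      simp only [hτ]
      exact inv_sub_inv (ne_of_gt hDn) (ne_of_gt hDn1)
    have hber : ((n:ℝ)+1) ^ (2*H) ≤ (((n:ℝ)+1)+1) ^ (2*H+1) - ((n:ℝ)+1) ^ (2*H+1) :=
      abel_aux_bernoulli hH0.le hn11
    rw [habsd, hτd]
    have step1 : ε^2 * a * |ℓ (n+2) - ℓ (n+1)| / ((ε * ℓ (n+1) + b) * (ε * ℓ (n+2) + b))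
        ≤ ε^2 * a * C₁ * ((n:ℝ)+1) ^ (2*H) /
          ((ε * C₂ * ((n:ℝ)+1) ^ (2*H+1) + b) * (ε * C₂ * (((n:ℝ)+1)+1) ^ (2*H+1) + b)) := by
      apply div_le_div₀ (by positivity) ?_ (mul_pos hDn hDn1) hABprod
      linarith [mul_le_mul_of_nonneg_left hΔℓ (by positivity : (0:ℝ) ≤ ε^2*a)]
    refine le_trans step1 ?_
    have hrhs : (a*C₁/C₂) * ε *
        (((ε * C₂ * (((n:ℝ)+1)+1) ^ (2*H+1) + b) - (ε * C₂ * ((n:ℝ)+1) ^ (2*H+1) + b)) /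
          ((ε * C₂ * ((n:ℝ)+1) ^ (2*H+1) + b) * (ε * C₂ * (((n:ℝ)+1)+1) ^ (2*H+1) + b)))
        = ((a*C₁/C₂) * ε *
            ((ε * C₂ * (((n:ℝ)+1)+1) ^ (2*H+1) + b) - (ε * C₂ * ((n:ℝ)+1) ^ (2*H+1) + b))) /
          ((ε * C₂ * ((n:ℝ)+1) ^ (2*H+1) + b) * (ε * C₂ * (((n:ℝ)+1)+1) ^ (2*H+1) + b)) := by
      ring
    rw [hrhs]
    apply (div_le_div_iff_of_pos_right (mul_pos hDn hDn1)).mpr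
    have hd : ε * C₂ * ((n:ℝ)+1) ^ (2*H) ≤
        (ε * C₂ * (((n:ℝ)+1)+1) ^ (2*H+1) + b) - (ε * C₂ * ((n:ℝ)+1) ^ (2*H+1) + b) := by
      linarith [mul_le_mul_of_nonneg_left hber (by positivity : (0:ℝ) ≤ ε * C₂)]
    have h := mul_le_mul_of_nonneg_left hd (by positivity : (0:ℝ) ≤ (a*C₁/C₂) * ε)
    calc ε^2 * a * C₁ * ((n:ℝ)+1) ^ (2*H)
        = (a*C₁/C₂) * ε * (ε * C₂ * ((n:ℝ)+1) ^ (2*H)) := by field_simp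
      _ ≤ _ := h
  -- summability of u
  have hu_abs_le : ∀ n : ℕ, |(g n - g (n+1)) * S (n+1)| ≤ (M*a*C₁/C₂) * ε * (τ n - τ (n+1)) := by
    intro n
    rw [abs_mul]
    calc |g n - g (n+1)| * |S (n+1)|
        ≤ ((a*C₁/C₂) * ε * (τ n - τ (n+1))) * M := by
          apply mul_le_mul (hkey n) (hSb _) (abs_nonneg _)
          have := hτ_nonneg n
          positivity
      _ = (M*a*C₁/C₂) * ε * (τ n - τ (n+1)) := by ring
  have huτ : Summable (fun n : ℕ => (M*a*C₁/C₂) * ε * (τ n - τ (n+1))) := hτsum.mul_left _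
  have hu_abs : Summable (fun n : ℕ => |(g n - g (n+1)) * S (n+1)|) :=
    Summable.of_nonneg_of_le (fun n => abs_nonneg _) hu_abs_le huτ
  have hu : Summable (fun n : ℕ => (g n - g (n+1)) * S (n+1)) := summable_abs_iff.mp hu_abs
  -- v telescopes to 0
  have hv : Summable (fun n : ℕ => g (n+1) * S (n+1) - g n * S n) := by
    refine (ht.sub hu).congr fun n => ?_
    ring
  have hgS0 : Tendsto (fun n : ℕ => g n * S n) atTop (nhds 0) := by
    refine squeeze_zero_norm (a := fun n : ℕ => (M*a/C₂) * (((n:ℝ)+1) ^ (2*H+1))⁻¹)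
      (fun n => ?_) ?_
    · rw [Real.norm_eq_abs, abs_mul, abs_of_pos (hgpos n)]
      have hnp : (0:ℝ) < ((n:ℝ)+1) ^ (2*H+1) := by positivity
      calc g n * |S n| ≤ (a / (C₂ * ((n:ℝ)+1) ^ (2*H+1))) * M :=
            mul_le_mul (hgle n) (hSb n) (abs_nonneg _) (by positivity)
        _ = (M*a/C₂) * (((n:ℝ)+1) ^ (2*H+1))⁻¹ := by field_simp
    · have h1 : Tendsto (fun n : ℕ => (n:ℝ) + 1) atTop atTop :=
        tendsto_atTop_add_const_right atTop 1 tendsto_natCast_atTop_atTop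
      have h2 : Tendsto (fun n : ℕ => ((n:ℝ)+1) ^ (2*H+1)) atTop atTop :=
        (tendsto_rpow_atTop hp0).comp h1
      have h3 := h2.inv_tendsto_atTop
      have h4 := h3.const_mul (M*a/C₂)
      simpa using h4
  have hvsum0 : ∑' n : ℕ, (g (n+1) * S (n+1) - g n * S n) = 0 := by
    have h1 := hv.hasSum.tendsto_sum_nat
    have h2 : (fun N : ℕ => ∑ i ∈ Finset.range N, (g (i+1) * S (i+1) - g i * S i))
        = fun N : ℕ => g N * S N - g 0 * S 0 :=
      funext fun N => Finset.sum_range_sub (fun i => g i * S i) N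
    rw [h2] at h1
    have h5 : g 0 * S 0 = 0 := by rw [hS0, mul_zero]
    have h4 : Tendsto (fun N : ℕ => g N * S N - g 0 * S 0) atTop (nhds 0) := by
      simpa only [h5, sub_zero] using hgS0
    exact tendsto_nhds_unique h1 h4
  -- assemble
  refine ⟨ht_abs, ?_⟩
  have hteq : ∑' n : ℕ, g n * (S (n+1) - S n) = ∑' n : ℕ, (g n - g (n+1)) * S (n+1) := by
    calc ∑' n : ℕ, g n * (S (n+1) - S n)
        = ∑' n : ℕ, ((g n - g (n+1)) * S (n+1) + (g (n+1) * S (n+1) - g n * S n)) :=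
          tsum_congr fun n => by ring
      _ = (∑' n : ℕ, (g n - g (n+1)) * S (n+1))
          + ∑' n : ℕ, (g (n+1) * S (n+1) - g n * S n) := Summable.tsum_add hu hv
      _ = ∑' n : ℕ, (g n - g (n+1)) * S (n+1) := by rw [hvsum0, add_zero]
  have hgoal : |∑' n : ℕ, g n * (S (n+1) - S n)| ≤ (M*a*C₁/(C₂*b) + 1) * ε := by
    rw [hteq]
    have h5 : |∑' n : ℕ, (g n - g (n+1)) * S (n+1)|
        ≤ ∑' n : ℕ, |(g n - g (n+1)) * S (n+1)| := by
      have := norm_tsum_le_tsum_norm (f := fun n : ℕ => (g n - g (n+1)) * S (n+1))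
        (by simpa only [Real.norm_eq_abs] using hu_abs)
      simpa only [Real.norm_eq_abs] using this
    have h6 : ∑' n : ℕ, |(g n - g (n+1)) * S (n+1)|
        ≤ ∑' n : ℕ, (M*a*C₁/C₂) * ε * (τ n - τ (n+1)) :=
      Summable.tsum_le_tsum hu_abs_le hu_abs huτ
    have h7 : ∑' n : ℕ, (M*a*C₁/C₂) * ε * (τ n - τ (n+1))
        = (M*a*C₁/C₂) * ε * ∑' n : ℕ, (τ n - τ (n+1)) := tsum_mul_left
    have h8 : (M*a*C₁/C₂) * ε * ∑' n : ℕ, (τ n - τ (n+1)) ≤ (M*a*C₁/C₂) * ε * (1/b) := by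
      apply mul_le_mul_of_nonneg_left hτtsum (by positivity)
    have h9 : (M*a*C₁/C₂) * ε * (1/b) ≤ (M*a*C₁/(C₂*b) + 1) * ε := by
      have : (M*a*C₁/C₂) * ε * (1/b) = (M*a*C₁/(C₂*b)) * ε := by
        first
        | (field_simp; ring)
        | field_simp
      rw [this]
      have h10 := mul_le_mul_of_nonneg_right (le_add_of_nonneg_right (le_of_lt one_pos) : M*a*C₁/(C₂*b) ≤ M*a*C₁/(C₂*b) + 1) hε0.le
      linarith
    linarith [h5, h6]
  exact hgoal
end
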